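/- A graph is rayless (contains no one-way infinite path) if and only if it belongs to the Schmidt closure of the class ℱ of finite graphs. -/
import Mathlib


open Cardinal

/-- `G` contains a ray: a one-way infinite path. -/
def HasRay {V : Type*} (G : SimpleGraph V) : Prop :=
  ∃ r : ℕ → V, Function.Injective r ∧ ∀ n : ℕ, G.Adj (r n) (r (n + 1))

universe u

/-- A class of graphs: a predicate on simple graphs over arbitrary vertex types in universe `u`. -/
def GraphClass : Type (u + 1) := ∀ (V : Type u), SimpleGraph V → Prop

/-- The component graph: the subgraph of `G` induced by a connected component `C` of `G - S`. -/
def CompGraph {V : Type u} (G : SimpleGraph V) (S : Set V)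
    (C : (G.induce Sᶜ).ConnectedComponent) : SimpleGraph C.supp :=
  (G.induce Sᶜ).induce C.supp

/-- The Schmidt hierarchy: `SchmidtLevel 𝒰 0 = 𝒰`, and for `μ > 0` a graph `G` lies in
`SchmidtLevel 𝒰 μ` iff there is a finite vertex set `S` such that every component of `G - S`
lies in `SchmidtLevel 𝒰 lam` for some `lam < μ`. -/
noncomputable def SchmidtLevel (𝒰 : GraphClass.{u}) (μ : Ordinal.{u}) : GraphClass.{u} :=
  fun V G =>
    if μ = 0 then 𝒰 V G
    else ∃ S : Set V, S.Finite ∧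
      ∀ C : (G.induce Sᶜ).ConnectedComponent,
        ∃ lam : Ordinal.{u}, ∃ _ : lam < μ, SchmidtLevel 𝒰 lam C.supp (CompGraph G S C)
  termination_by μ
  decreasing_by exact ‹_›

/-- A graph belongs to the Schmidt closure of `𝒰` if it lies in some level of the hierarchy. -/
def InSchmidtClosure (𝒰 : GraphClass.{u}) {V : Type u} (G : SimpleGraph V) : Prop :=
  ∃ μ : Ordinal.{u}, SchmidtLevel 𝒰 μ V G

/-- The rank of a graph in the Schmidt closure: the least level containing it. -/
noncomputable def SchmidtRank (𝒰 : GraphClass.{u}) {V : Type u} (G : SimpleGraph V) :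
    Ordinal.{u} :=
  sInf {μ : Ordinal.{u} | SchmidtLevel 𝒰 μ V G}


open SimpleGraph

/-- Class of finite graphs. -/
abbrev Ufin : GraphClass.{u} := fun (W : Type u) (_ : SimpleGraph W) => Finite W

/-- Nested induced subgraphs flatten. -/
noncomputable def induceInduceIso {W : Type u} (H : SimpleGraph W) (B : Set W) (T : Set B) :
    (H.induce B).induce T ≃g H.induce (Subtype.val '' T) where
  toEquiv := Equiv.Set.image Subtype.val T Subtype.val_injective
  map_rel_iff' := by
    rintro ⟨a, ha⟩ ⟨b, hb⟩
    simp [Equiv.Set.image, Equiv.Set.imageOfInjOn, comap_adj]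

lemma reachable_induce_of_walk {W : Type u} {H : SimpleGraph W} {C : H.ConnectedComponent} :
    ∀ {x y : W} (_ : H.Walk x y) (hx : x ∈ C.supp) (hy : y ∈ C.supp),
      (H.induce C.supp).Reachable ⟨x, hx⟩ ⟨y, hy⟩ := by
  intro x y p
  induction p with
  | nil => intro hx hy; rfl
  | @cons x z y h q ih =>
    intro hx hy
    have hz : z ∈ C.supp := by
      rw [ConnectedComponent.mem_supp_iff] at hx ⊢
      rw [← hx]; exact (ConnectedComponent.sound h.symm.reachable)
    exact (Adj.reachable (by exact h : (H.induce C.supp).Adj ⟨x, hx⟩ ⟨z, hz⟩)).trans (ih hz hy)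

lemma connected_induce_supp {W : Type u} {H : SimpleGraph W} (C : H.ConnectedComponent) :
    (H.induce C.supp).Connected := by
  obtain ⟨v, hv⟩ := C.exists_rep
  have hv' : v ∈ C.supp := hv
  have : Nonempty (C.supp : Set W) := ⟨⟨v, hv'⟩⟩
  constructor
  rintro ⟨x, hx⟩ ⟨y, hy⟩
  have : H.Reachable x y := by
    rw [ConnectedComponent.mem_supp_iff] at hx hy
    exact ConnectedComponent.exact (hx.trans hy.symm)
  obtain ⟨p⟩ := this
  exact reachable_induce_of_walk p hx hy

/-- An iso restricts to an iso of component graphs. -/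
def compIso {W W' : Type u} {H : SimpleGraph W} {H' : SimpleGraph W'} (φ : H ≃g H')
    (C : H.ConnectedComponent) :
    H.induce C.supp ≃g H'.induce (φ.connectedComponentEquiv C).supp where
  toEquiv := ConnectedComponent.isoEquivSupp φ C
  map_rel_iff' := φ.map_rel_iff

lemma schmidtLevel_finite (μ : Ordinal.{u}) {V : Type u} (G : SimpleGraph V) (h : Finite V) :
    SchmidtLevel Ufin μ V G := by
  rcases eq_or_ne μ 0 with rfl | hμ
  · rw [SchmidtLevel, if_pos rfl]; exact h
  · rw [SchmidtLevel, if_neg hμ]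
    refine ⟨Set.univ, Set.finite_univ, fun C => absurd C.exists_rep ?_⟩
    rintro ⟨⟨x, hx⟩, -⟩
    simp at hx

lemma schmidtLevel_of_iso : ∀ (μ : Ordinal.{u}), ∀ {V W : Type u} {G : SimpleGraph V}
    {H : SimpleGraph W} (_ : G ≃g H), SchmidtLevel Ufin μ V G → SchmidtLevel Ufin μ W H := by
  intro μ
  induction μ using Ordinal.induction with
  | h μ ih =>
    intro V W G H e hG
    rcases eq_or_ne μ 0 with rfl | hμ
    · rw [SchmidtLevel, if_pos rfl] at hG ⊢
      exact Finite.of_equiv V e.toEquiv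
    · rw [SchmidtLevel, if_neg hμ] at hG ⊢
      obtain ⟨S, hSfin, hS⟩ := hG
      refine ⟨e.toEquiv '' S, hSfin.image _, ?_⟩
      have hcompl : (e.toEquiv '' S)ᶜ = e.toEquiv '' Sᶜ := by
        rw [Equiv.image_compl]
      -- iso between the induced graphs on complements
      have eS : G.induce Sᶜ ≃g H.induce (e.toEquiv '' S)ᶜ :=
        { toFun := fun x => ⟨e x.1, by
            simp only [Set.mem_compl_iff, Set.mem_image, not_exists, not_and]
            intro a ha hae
            exact x.2 (by rwa [← e.toEquiv.injective hae])⟩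
          invFun := fun y => ⟨e.symm y.1, by
            intro hy
            exact y.2 ⟨e.symm y.1, hy, by simp⟩⟩
          left_inv := fun x => Subtype.ext (by simp)
          right_inv := fun y => Subtype.ext (by simp)
          map_rel_iff' := fun {a b} => e.map_rel_iff }
      intro C'
      obtain ⟨lam, hlam, hlev⟩ := hS (eS.connectedComponentEquiv.symm C')
      refine ⟨lam, hlam, ?_⟩
      have h2 := ih lam hlam (compIso eS (eS.connectedComponentEquiv.symm C')) hlev
      rw [Equiv.apply_symm_apply] at h2
      exact h2

lemma schmidtLevel_mono {μ μ' : Ordinal.{u}} (h : μ ≤ μ') {V : Type u} {G : SimpleGraph V}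
    (hG : SchmidtLevel Ufin μ V G) : SchmidtLevel Ufin μ' V G := by
  rcases eq_or_ne μ' 0 with rfl | hμ'
  · rwa [nonpos_iff_eq_zero.mp h] at hG
  rcases eq_or_ne μ 0 with rfl | hμ
  · rw [SchmidtLevel, if_pos rfl] at hG
    exact schmidtLevel_finite _ _ hG
  · rw [SchmidtLevel, if_neg hμ] at hG
    rw [SchmidtLevel, if_neg hμ']
    obtain ⟨S, hSfin, hS⟩ := hG
    refine ⟨S, hSfin, fun C => ?_⟩
    obtain ⟨lam, hlam, hlev⟩ := hS C
    exact ⟨lam, hlam.trans_le h, hlev⟩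

lemma closure_of_comps {V : Type u} {G : SimpleGraph V} (S : Set V) (hS : S.Finite)
    (h : ∀ C : (G.induce Sᶜ).ConnectedComponent, InSchmidtClosure Ufin (CompGraph G S C)) :
    InSchmidtClosure Ufin G := by
  choose f hf using h
  refine ⟨Order.succ (iSup f), ?_⟩
  rw [SchmidtLevel, if_neg (Ordinal.succ_ne_zero (iSup f))]
  refine ⟨S, hS, fun C => ⟨f C, (Ordinal.le_iSup f C).trans_lt (Order.lt_succ _), hf C⟩⟩

lemma no_ray_of_schmidtLevel : ∀ (μ : Ordinal.{u}), ∀ {V : Type u} (G : SimpleGraph V),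
    SchmidtLevel Ufin μ V G → ¬ HasRay G := by
  intro μ
  induction μ using Ordinal.induction with
  | h μ ih =>
    intro V G hG ⟨r, rinj, radj⟩
    rcases eq_or_ne μ 0 with rfl | hμ
    · rw [SchmidtLevel, if_pos rfl] at hG
      have : Finite ℕ := Finite.of_injective r rinj
      exact not_finite ℕ
    · rw [SchmidtLevel, if_neg hμ] at hG
      obtain ⟨S, hSfin, hS⟩ := hG
      have hpre : (r ⁻¹' S).Finite := hSfin.preimage rinj.injOn
      obtain ⟨N, hN⟩ := hpre.bddAbove
      have ht : ∀ n, r (N + 1 + n) ∈ Sᶜ := by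
        intro n hn
        exact absurd (hN hn) (by omega)
      set t : ℕ → (Sᶜ : Set V) := fun n => ⟨r (N + 1 + n), ht n⟩ with htdef
      have tadj : ∀ n, (G.induce Sᶜ).Adj (t n) (t (n + 1)) := by
        intro n
        show G.Adj (r (N + 1 + n)) (r (N + 1 + (n + 1)))
        rw [← Nat.add_assoc]
        exact radj _
      have hmem : ∀ n, t n ∈ ((G.induce Sᶜ).connectedComponentMk (t 0)).supp := by
        intro n
        induction n with
        | zero => exact rfl
        | succ k ihk =>
          rw [ConnectedComponent.mem_supp_iff] at ihk ⊢
          rw [← ihk]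
          exact ConnectedComponent.sound (tadj k).symm.reachable
      set C := (G.induce Sᶜ).connectedComponentMk (t 0)
      obtain ⟨lam, hlam, hlev⟩ := hS C
      refine ih lam hlam (CompGraph G S C) hlev ⟨fun n => ⟨t n, hmem n⟩, ?_, ?_⟩
      · intro m n hmn
        have : r (N + 1 + m) = r (N + 1 + n) := congrArg (Subtype.val ∘ Subtype.val) hmn
        have := rinj this
        omega
      · intro n
        exact tadj n

lemma closure_iso {V W : Type u} {G : SimpleGraph V} {H : SimpleGraph W} (e : G ≃g H)
    (h : InSchmidtClosure Ufin G) : InSchmidtClosure Ufin H :=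
  h.imp fun μ => schmidtLevel_of_iso μ e

lemma exists_bad_comp {V : Type u} {G : SimpleGraph V} {A : Set V}
    (hA : ¬ InSchmidtClosure Ufin (G.induce A)) (S : Set A) (hS : S.Finite) :
    ∃ C : ((G.induce A).induce Sᶜ).ConnectedComponent,
      ¬ InSchmidtClosure Ufin (G.induce (Subtype.val '' (Subtype.val '' C.supp))) := by
  by_contra hcon
  push_neg at hcon
  refine hA (closure_of_comps S hS fun C => ?_)
  exact closure_iso ((induceInduceIso (G.induce A) Sᶜ C.supp).trans
    (induceInduceIso G A (Subtype.val '' C.supp))).symm (hcon C)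

lemma exists_nbr_aux {W : Type u} {H : SimpleGraph W} {v' : W} :
    ∀ {x : W} (_ : H.Walk x v') (hx : x ≠ v'), ∃ u : W, ∃ hu : u ≠ v', H.Adj u v' ∧
      (H.induce ({v'}ᶜ : Set W)).Reachable ⟨x, hx⟩ ⟨u, hu⟩ := by
  intro x p
  induction p with
  | nil => intro hx; exact absurd rfl hx
  | @cons x y z h q ih =>
    intro hx
    rcases eq_or_ne y z with rfl | hy
    · exact ⟨x, hx, h, Reachable.refl _⟩
    · obtain ⟨u, hu, hadj, hreach⟩ := ih hy
      refine ⟨u, hu, hadj, Reachable.trans (Adj.reachable ?_) hreach⟩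
      exact h

lemma step_lemma {V : Type u} {G : SimpleGraph V} {A : Set V}
    (hA : ¬ InSchmidtClosure Ufin (G.induce A)) (hconn : (G.induce A).Connected)
    {v : V} (hv : v ∈ A) :
    ∃ B : Set V, B ⊆ A ∧ v ∉ B ∧ ¬ InSchmidtClosure Ufin (G.induce B) ∧
      (G.induce B).Connected ∧ ∃ u ∈ B, G.Adj v u := by
  set v' : ↥A := ⟨v, hv⟩ with hv'def
  obtain ⟨C, hC⟩ := exists_bad_comp hA ({v'} : Set ↥A) (Set.finite_singleton _)
  refine ⟨Subtype.val '' (Subtype.val '' C.supp), ?_, ?_, hC, ?_, ?_⟩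
  · rintro b ⟨a, ⟨c, hc, rfl⟩, rfl⟩
    exact c.1.2
  · rintro ⟨a, ⟨c, hc, rfl⟩, hb⟩
    exact c.2 (Subtype.ext hb)
  · exact (Iso.connected_iff ((induceInduceIso _ _ _).trans (induceInduceIso _ _ _))).mp
      (connected_induce_supp C)
  · obtain ⟨w, hw⟩ := C.exists_rep
    have hwv : (w : ↥A) ≠ v' := w.2
    obtain ⟨p⟩ := hconn.preconnected (w : ↥A) v'
    obtain ⟨u, hu, hadj, hreach⟩ := exists_nbr_aux p hwv
    have hmem : (⟨u, hu⟩ : ↥({v'}ᶜ : Set ↥A)) ∈ C.supp := by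
      rw [ConnectedComponent.mem_supp_iff]
      refine (ConnectedComponent.sound ?_).trans hw
      exact hreach.symm
    exact ⟨u.1, ⟨u, ⟨⟨u, hu⟩, hmem, rfl⟩, rfl⟩, hadj.symm⟩

lemma init_lemma {V : Type u} {G : SimpleGraph V} (hG : ¬ InSchmidtClosure Ufin G) :
    ∃ B : Set V, ¬ InSchmidtClosure Ufin (G.induce B) ∧ (G.induce B).Connected ∧ ∃ v, v ∈ B := by
  have hA : ¬ InSchmidtClosure Ufin (G.induce Set.univ) :=
    fun h => hG (closure_iso (induceUnivIso G) h)
  obtain ⟨C, hC⟩ := exists_bad_comp hA (∅ : Set (Set.univ : Set V)) Set.finite_empty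
  refine ⟨_, hC, ?_, ?_⟩
  · exact (Iso.connected_iff ((induceInduceIso _ _ _).trans (induceInduceIso _ _ _))).mp
      (connected_induce_supp C)
  · obtain ⟨w, hw⟩ := C.exists_rep
    exact ⟨w.1.1, ⟨w.1, ⟨w, hw, rfl⟩, rfl⟩⟩

/-- Schmidt's theorem: a graph is rayless iff it lies in the Schmidt closure of the class of
finite graphs. -/
theorem rayless_iff_inSchmidtClosure_finite {V : Type u} (G : SimpleGraph V) :
    ¬ HasRay G ↔ InSchmidtClosure (fun (W : Type u) (_ : SimpleGraph W) => Finite W) G := by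
  constructor
  · intro hray
    by_contra hG
    apply hray
    obtain ⟨B₀, hB₀, hconn₀, v₀, hv₀⟩ := init_lemma hG
    let St := {p : Set V × V // p.2 ∈ p.1 ∧ ¬ InSchmidtClosure Ufin (G.induce p.1) ∧
      (G.induce p.1).Connected}
    have hstep : ∀ s : St, ∃ t : St, t.1.1 ⊆ s.1.1 ∧ s.1.2 ∉ t.1.1 ∧ G.Adj s.1.2 t.1.2 := by
      rintro ⟨⟨A, v⟩, hv, hA, hconn⟩
      obtain ⟨B, hBA, hvB, hBbad, hBconn, u, huB, hadj⟩ := step_lemma hA hconn hv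
      exact ⟨⟨(B, u), huB, hBbad, hBconn⟩, hBA, hvB, hadj⟩
    choose F hF1 hF2 hF3 using hstep
    let s₀ : St := ⟨(B₀, v₀), hv₀, hB₀, hconn₀⟩
    let f : ℕ → St := fun n => F^[n] s₀
    have hfs : ∀ n, f (n + 1) = F (f n) := fun n => Function.iterate_succ_apply' F n s₀
    have hsub : ∀ m n, m ≤ n → (f n).1.1 ⊆ (f m).1.1 := by
      intro m n h
      induction n, h using Nat.le_induction with
      | base => exact subset_rfl
      | succ n hmn ih => rw [hfs n]; exact (hF1 (f n)).trans ih
    have key : ∀ m n, m < n → (f n).1.2 ≠ (f m).1.2 := by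
      intro m n h hne
      have h1 : (f n).1.2 ∈ (f (m + 1)).1.1 := hsub (m + 1) n h (f n).2.1
      rw [hfs m] at h1
      exact hF2 (f m) (hne ▸ h1)
    refine ⟨fun n => (f n).1.2, ?_, ?_⟩
    · intro a b hab
      rcases lt_trichotomy a b with h | h | h
      · exact absurd hab.symm (key a b h)
      · exact h
      · exact absurd hab (key b a h)
    · intro n
      have := hF3 (f n)
      rwa [← hfs n] at this
  · rintro ⟨μ, hμ⟩
    exact no_ray_of_schmidtLevel μ G hμ
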